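/- Let F be a finite field and let c, d be natural numbers with 2 ≤ c ≤ d and |F| ≥ C(d−1, c−1). Then there exist vectors φ₁, …, φ_d in F^c such that every c of them are linearly independent, i.e., every c-element subfamily forms a basis of F^c. -/

import Mathlib

private lemma nat_le_choose (n k : ℕ) (h1 : 1 ≤ k) (h2 : k + 1 ≤ n) : n ≤ n.choose k := by
  induction n generalizing k with
  | zero => omega
  | succ n ih =>
    rcases Nat.eq_or_lt_of_le (show k ≤ n by omega) with hk | hk
    · subst hk; rw [Nat.choose_succ_self_right]
    · obtain ⟨k', rfl⟩ : ∃ k', k = k' + 1 := ⟨k - 1, by omega⟩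
      have h3 := ih (k' + 1) h1 (by omega)
      have h4 : 0 < n.choose k' := Nat.choose_pos (by omega)
      rw [Nat.choose_succ_succ]
      simp only [Nat.succ_eq_add_one] at *
      omega

private lemma det_special {F : Type*} [Field F] (n : ℕ) (t : Fin n → F)
    (ht : Function.Injective t) (N : Matrix (Fin (n + 1)) (Fin (n + 1)) F)
    (h0 : ∀ j, N 0 j = if (j : ℕ) = n then 1 else 0)
    (hs : ∀ i j, N i.succ j = t i ^ (j : ℕ)) :
    N.det ≠ 0 := by
  rw [Matrix.det_succ_row_zero, Finset.sum_eq_single (Fin.last n)]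
  · have hsub : N.submatrix Fin.succ (Fin.last n).succAbove = Matrix.vandermonde t := by
      ext i j
      rw [Fin.succAbove_last]
      simp [Matrix.submatrix_apply, hs, Matrix.vandermonde]
    rw [hsub, h0]
    simp only [Fin.val_last, if_pos rfl]
    exact mul_ne_zero (mul_ne_zero (pow_ne_zero _ (neg_ne_zero.mpr one_ne_zero)) one_ne_zero)
      (Matrix.det_vandermonde_ne_zero_iff.mpr ht)
  · intro j _ hj
    rw [h0, if_neg (by simpa [Fin.ext_iff] using hj)]
    ring
  · intro h
    exact absurd (Finset.mem_univ _) h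


/-- Let `F` be a finite field and `c, d` natural numbers with
`2 ≤ c ≤ d` and `|F| ≥ C(d−1, c−1)`. Then there exist vectors `φ₁, …, φ_d ∈ F^c`
such that every `c` of them are linearly independent, i.e. every `c`-element
subfamily forms a basis of `F^c`. -/
theorem exists_generic_family_of_vectors
    (F : Type*) [Field F] [Fintype F]
    (c d : ℕ) (hc : 2 ≤ c) (hcd : c ≤ d)
    (hF : Nat.choose (d - 1) (c - 1) ≤ Fintype.card F) :
    ∃ φ : Fin d → (Fin c → F), ∀ s : Finset (Fin d), s.card = c →
        LinearIndependent F (fun i : s => φ i.1) := by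
  rcases Nat.eq_or_lt_of_le hcd with rfl | hlt
  · -- c = d : take the rows of the identity matrix
    refine ⟨fun i j => (1 : Matrix (Fin c) (Fin c) F) i j, fun s _ => ?_⟩
    have h1 : LinearIndependent F (fun i : Fin c => (1 : Matrix (Fin c) (Fin c) F) i) :=
      Matrix.linearIndependent_rows_iff_isUnit.mpr isUnit_one
    exact h1.comp _ Subtype.val_injective
  · obtain ⟨n, rfl⟩ : ∃ n, c = n + 1 := ⟨c - 1, by omega⟩
    have hcard : d - 1 ≤ Fintype.card F := by
      refine le_trans (nat_le_choose (d - 1) n (by omega) (by omega)) ?_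
      simpa using hF
    obtain ⟨τ⟩ := Function.Embedding.nonempty_of_card_le
      (α := Fin (d - 1)) (β := F) (by simpa using hcard)
    set φ : Fin d → Fin (n + 1) → F := fun i j =>
      if h : (i : ℕ) < d - 1 then τ ⟨i, h⟩ ^ (j : ℕ) else if (j : ℕ) = n then 1 else 0 with hφ
    refine ⟨φ, fun s hs => ?_⟩
    have hφ_low : ∀ (i : Fin d) (h : (i : ℕ) < d - 1) (j : Fin (n + 1)),
        φ i j = τ ⟨i, h⟩ ^ (j : ℕ) := by
      intro i h j; simp only [hφ, dif_pos h]
    set iinf : Fin d := ⟨d - 1, by omega⟩ with hiinf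
    by_cases hmem : iinf ∈ s
    · -- the "infinity" row is in the subfamily
      set s' := s.erase iinf with hs'
      have hcard' : Fintype.card ↥s' = n := by
        rw [Fintype.card_coe, hs', Finset.card_erase_of_mem hmem, hs]; omega
      have e' : ↥s' ≃ Fin n := Fintype.equivFinOfCardEq hcard'
      have hlow : ∀ k : Fin n, ((e'.symm k : Fin d) : ℕ) < d - 1 := by
        intro k
        have h1 : (e'.symm k : Fin d) ≠ iinf := Finset.ne_of_mem_erase (e'.symm k).2
        have h2 : ((e'.symm k : Fin d) : ℕ) < d := (e'.symm k : Fin d).isLt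
        have h3 : ((e'.symm k : Fin d) : ℕ) ≠ d - 1 := by
          intro h; exact h1 (Fin.ext h)
        omega
      set t : Fin n → F := fun k => τ ⟨(e'.symm k : Fin d), hlow k⟩ with hts
      have ht : Function.Injective t := by
        intro a b hab
        have := τ.injective hab
        have hval : ((e'.symm a : Fin d) : ℕ) = ((e'.symm b : Fin d) : ℕ) := by
          simpa [Fin.ext_iff] using this
        exact e'.symm.injective (Subtype.ext (Fin.ext hval))
      set g : Fin (n + 1) → ↥s := Fin.cases ⟨iinf, hmem⟩
        (fun k => ⟨(e'.symm k : Fin d), Finset.mem_of_mem_erase (e'.symm k).2⟩) with hg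
      have hgne : ∀ k : Fin n, g k.succ ≠ g 0 := by
        intro k h
        have h1 : (e'.symm k : Fin d) ≠ iinf := Finset.ne_of_mem_erase (e'.symm k).2
        apply h1
        simpa [hg, Subtype.ext_iff] using h
      have hginj : Function.Injective g := by
        intro a b hab
        induction a using Fin.cases with
        | zero =>
          induction b using Fin.cases with
          | zero => rfl
          | succ b => exact absurd hab.symm (hgne b)
        | succ a =>
          induction b using Fin.cases with
          | zero => exact absurd hab (hgne a)
          | succ b =>
            congr 1
            apply e'.symm.injective
            apply Subtype.ext
            simpa [hg, Subtype.ext_iff] using hab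
      have hgbij : Function.Bijective g :=
        (Fintype.bijective_iff_injective_and_card g).mpr
          ⟨hginj, by simp [Fintype.card_coe, hs]⟩
      set e : Fin (n + 1) ≃ ↥s := Equiv.ofBijective g hgbij with he
      rw [← linearIndependent_equiv e]
      have key : LinearIndependent F
          (fun k : Fin (n + 1) => (fun k j => φ (g k : Fin d) j : Matrix (Fin (n+1)) (Fin (n+1)) F) k) := by
        apply (Matrix.linearIndependent_rows_iff_isUnit
          (A := (fun k j => φ (g k : Fin d) j : Matrix (Fin (n+1)) (Fin (n+1)) F))).mpr
        refine (Matrix.isUnit_iff_isUnit_det _).mpr ?_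
        apply (det_special n t ht _ ?_ ?_).isUnit
        · intro j
          have : ¬ ((iinf : ℕ) < d - 1) := by simp [hiinf]
          simp only [hg, Fin.cases_zero]
          simp only [hφ, dif_neg this]
        · intro i j
          simp only [hg, Fin.cases_succ]
          rw [hφ_low _ (hlow i)]
      exact key
    · -- all indices of `s` are "moment curve" indices: Vandermonde
      have hlow : ∀ i : ↥s, ((i : Fin d) : ℕ) < d - 1 := by
        intro i
        have h2 : ((i : Fin d) : ℕ) < d := (i : Fin d).isLt
        have h3 : ((i : Fin d) : ℕ) ≠ d - 1 := by
          intro h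
          exact hmem (by rw [show iinf = (i : Fin d) from Fin.ext h.symm]; exact i.2)
        omega
      have e : Fin (n + 1) ≃ ↥s :=
        (Fintype.equivFinOfCardEq (by simp [Fintype.card_coe, hs])).symm
      rw [← linearIndependent_equiv e]
      set t : Fin (n + 1) → F := fun k => τ ⟨(e k : Fin d), hlow (e k)⟩ with hts
      have ht : Function.Injective t := by
        intro a b hab
        have := τ.injective hab
        have hval : ((e a : Fin d) : ℕ) = ((e b : Fin d) : ℕ) := by
          simpa [Fin.ext_iff] using this
        exact e.injective (Subtype.ext (Fin.ext hval))
      have hM : (fun k j => φ (e k : Fin d) j : Matrix (Fin (n+1)) (Fin (n+1)) F)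
          = Matrix.vandermonde t := by
        ext k j
        rw [hφ_low _ (hlow (e k))]
        rfl
      have key : LinearIndependent F
          (fun k : Fin (n + 1) => (fun k j => φ (e k : Fin d) j : Matrix (Fin (n+1)) (Fin (n+1)) F) k) := by
        apply (Matrix.linearIndependent_rows_iff_isUnit
          (A := (fun k j => φ (e k : Fin d) j : Matrix (Fin (n+1)) (Fin (n+1)) F))).mpr
        refine (Matrix.isUnit_iff_isUnit_det _).mpr ?_
        rw [hM]
        exact (Matrix.det_vandermonde_ne_zero_iff.mpr ht).isUnit
      exact key
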